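/- Combining the capacity–measure inequality t·F(l+t) ≤ A·F(l)² (where F(l) := Cap_{θ_s}({φ_s < −l}, U)^{1/n}), the decay F(l) → 0 as l → ∞ uniformly in s, and the De Giorgi iteration lemma, one obtains a uniform bound: there exists S independent of s ∈ (0,1) such that φ_s ≥ −S on U. -/

import Mathlib

noncomputable section
open Complex MeasureTheory Set Filter Metric ENNReal
open scoped ComplexOrder

/-- `ℂⁿ`. -/
abbrev Cn (n : ℕ) := Fin n → ℂ

/-- Real second derivative `D²f(x)(v,w)`. -/
def d2 {n : ℕ} (f : Cn n → ℝ) (x v w : Cn n) : ℝ :=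
  fderiv ℝ (fun y => fderiv ℝ f y w) x v

/-- The coefficient `∂∂̄f(x)(v, w̄)` of the complex Hessian (Levi form) of `f`. -/
def levi {n : ℕ} (f : Cn n → ℝ) (x v w : Cn n) : ℂ :=
  (1 / 4 : ℂ) * (((d2 f x v w + d2 f x (Complex.I • v) (Complex.I • w) : ℝ) : ℂ)
    + Complex.I * ((d2 f x (Complex.I • v) w - d2 f x v (Complex.I • w) : ℝ) : ℂ))

/-- The matrix `(∂_i ∂̄_j f)(x)` of the Levi form in the standard coordinates. -/
def leviMatrix {n : ℕ} (f : Cn n → ℝ) (x : Cn n) : Matrix (Fin n) (Fin n) ℂ :=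
  Matrix.of fun i j => levi f x (Pi.single i 1) (Pi.single j 1)

/-- `u` is a smooth `θ`-plurisubharmonic function on `U`: `θ + i∂∂̄u ≥ 0` on `U`. -/
def PSHOn {n : ℕ} (θ : Cn n → Matrix (Fin n) (Fin n) ℂ) (u : Cn n → ℝ)
    (U : Set (Cn n)) : Prop :=
  ContDiffOn ℝ 2 u U ∧ ∀ x ∈ U, (θ x + leviMatrix u x).PosSemidef

/-- The Monge–Ampère measure `(θ + i∂∂̄u)ⁿ` of `u` on `U`, as the measure with density
`det(θ + i∂∂̄u)` against Lebesgue measure. -/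
def MAm {n : ℕ} (θ : Cn n → Matrix (Fin n) (Fin n) ℂ) (u : Cn n → ℝ)
    (U : Set (Cn n)) : Measure (Cn n) :=
  (volume.restrict U).withDensity fun x => ENNReal.ofReal ((θ x + leviMatrix u x).det.re)

/-- The relative Monge–Ampère capacity
`Cap_θ(K,U) = sup{∫_K (θ+i∂∂̄u)ⁿ : u θ-psh on U, −1 < u < 0}`. -/
def Cap {n : ℕ} (θ : Cn n → Matrix (Fin n) (Fin n) ℂ) (U K : Set (Cn n)) : ℝ≥0∞ :=
  ⨆ u ∈ {u : Cn n → ℝ | PSHOn θ u U ∧ ∀ x ∈ U, u x ∈ Ioo (-1 : ℝ) 0}, MAm θ u U K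


lemma Cap_mono' {n : ℕ} (θ : Cn n → Matrix (Fin n) (Fin n) ℂ) (U : Set (Cn n))
    {K K' : Set (Cn n)} (h : K ⊆ K') : Cap θ U K ≤ Cap θ U K' :=
  iSup₂_mono fun _ _ => measure_mono h

/-- Uniform `C⁰` bound via De Giorgi iteration: with
`F(s,l) = Cap_{θ_s}({φ_s < -l},U)^{1/n}` satisfying `t·F(l+t) ≤ A·F(l)²` and decaying
to `0` uniformly in `s`, and vanishing capacity forcing emptiness of the sublevel set,
there is `S` independent of `s ∈ (0,1)` with `φ_s ≥ -S` on `U`. -/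
theorem uniform_lower_bound {n : ℕ} (U : Set (Cn n)) (hUo : IsOpen U)
    (hUb : Bornology.IsBounded U)
    (ω θ : Cn n → Matrix (Fin n) (Fin n) ℂ)
    (hω : ∀ x ∈ U, (ω x).PosSemidef) (hθ : ∀ x ∈ U, (θ x).PosDef)
    (φ : ℝ → Cn n → ℝ)
    (hpsh : ∀ s ∈ Ioo (0:ℝ) 1, PSHOn (fun x => ω x + (s : ℂ) • θ x) (φ s) U)
    (hbdry : ∀ s ∈ Ioo (0:ℝ) 1, ∀ z ∈ frontier U,
      Tendsto (φ s) (nhdsWithin z U) (nhds 0))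
    (A : ℝ) (hA : 0 < A)
    (F : ℝ → ℝ → ℝ≥0∞)
    (hF : ∀ s l, F s l
      = Cap (fun x => ω x + (s : ℂ) • θ x) U {x ∈ U | φ s x < -l} ^ (1 / (n : ℝ)))
    (hineq : ∀ s ∈ Ioo (0:ℝ) 1, ∀ l ≥ (0:ℝ), ∀ t ∈ Icc (0:ℝ) 1,
      ENNReal.ofReal t * F s (l + t) ≤ ENNReal.ofReal A * F s l ^ 2)
    (hdecay : ∀ ε : ℝ≥0∞, 0 < ε → ∃ l₀ : ℝ, ∀ s ∈ Ioo (0:ℝ) 1, ∀ l ≥ l₀, F s l ≤ ε)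
    (hempty : ∀ s ∈ Ioo (0:ℝ) 1, ∀ l : ℝ, F s l = 0 → ∀ x ∈ U, -l ≤ φ s x) :
    ∃ S : ℝ, ∀ s ∈ Ioo (0:ℝ) 1, ∀ x ∈ U, -S ≤ φ s x := by
  obtain ⟨l₀, hl₀⟩ := hdecay (ENNReal.ofReal (1/(8*A)))
    (ENNReal.ofReal_pos.mpr (by positivity))
  set L : ℝ := max l₀ 0 with hLdef
  have hL0 : (0:ℝ) ≤ L := le_max_right _ _
  refine ⟨L + 1, fun s hs x hx => ?_⟩
  apply hempty s hs (L + 1) ?_ x hx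
  -- monotonicity of F s
  have hFmono : ∀ l l' : ℝ, l ≤ l' → F s l' ≤ F s l := by
    intro l l' h
    rw [hF, hF]
    refine ENNReal.rpow_le_rpow ?_ (by positivity)
    refine Cap_mono' _ _ fun y hy => ⟨hy.1, lt_of_lt_of_le hy.2 (by linarith)⟩
  have key : ∀ k : ℕ, F s (L + 1 - (1/2)^k)
      ≤ ENNReal.ofReal ((1/(8*A)) * (1/4)^k) := by
    intro k
    induction k with
    | zero =>
      simpa using hl₀ s hs L (le_max_left _ _)
    | succ k ih =>
      have hp : (0:ℝ) < (1/2)^k := by positivity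
      have hp1 : ((1:ℝ)/2)^k ≤ 1 := pow_le_one₀ (by norm_num) (by norm_num)
      have ht : ((1:ℝ)/2)^(k+1) ∈ Icc (0:ℝ) 1 :=
        ⟨by positivity, pow_le_one₀ (by norm_num) (by norm_num)⟩
      have hl : (0:ℝ) ≤ L + 1 - (1/2)^k := by linarith
      have h1 := hineq s hs (L + 1 - (1/2)^k) hl ((1/2)^(k+1)) ht
      have heq : L + 1 - (1/2)^k + (1/2)^(k+1) = L + 1 - (1/2)^(k+1) := by ring
      rw [heq] at h1
      have hc : (0:ℝ) ≤ (1/(8*A)) * (1/4)^k := by positivity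
      have hreal : A * ((1/(8*A)) * (1/4)^k)^2
          ≤ (1/2)^(k+1) * ((1/(8*A)) * (1/4)^(k+1)) := by
        have h4 : ((1:ℝ)/4)^k = ((1/2)^k)^2 := by
          rw [show (1/4:ℝ) = (1/2)^2 by norm_num, ← pow_mul, mul_comm, pow_mul]
        rw [pow_succ ((1:ℝ)/2), pow_succ ((1:ℝ)/4), h4]
        set p : ℝ := (1/2)^k with hpd
        have e1 : A * (1/(8*A) * p^2)^2 = p^4 / (64*A) := by
          field_simp; ring
        have e2 : p * (1/2) * (1/(8*A) * (p^2 * (1/4))) = p^3 / (64*A) := by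
          field_simp; ring
        rw [e1, e2, div_le_div_iff₀ (by positivity) (by positivity)]
        nlinarith [pow_le_pow_of_le_one hp.le hp1 (show 3 ≤ 4 by norm_num), mul_pos (pow_pos hp 3) hA, mul_pos (pow_pos hp 4) hA]
      have h2 : ENNReal.ofReal A * F s (L + 1 - (1/2)^k) ^ 2
          ≤ ENNReal.ofReal ((1/2)^(k+1)) * ENNReal.ofReal ((1/(8*A)) * (1/4)^(k+1)) := by
        calc ENNReal.ofReal A * F s (L + 1 - (1/2)^k) ^ 2
            ≤ ENNReal.ofReal A * (ENNReal.ofReal ((1/(8*A)) * (1/4)^k)) ^ 2 := by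
              exact mul_le_mul_right (pow_le_pow_left' ih 2) _
          _ = ENNReal.ofReal (A * ((1/(8*A)) * (1/4)^k)^2) := by
              rw [← ENNReal.ofReal_pow hc, ← ENNReal.ofReal_mul hA.le]
          _ ≤ ENNReal.ofReal ((1/2)^(k+1) * ((1/(8*A)) * (1/4)^(k+1))) :=
              ENNReal.ofReal_le_ofReal hreal
          _ = _ := ENNReal.ofReal_mul (by positivity)
      have h3 := h1.trans h2
      exact (ENNReal.mul_le_mul_iff_right (ENNReal.ofReal_pos.mpr (by positivity)).ne'
        ENNReal.ofReal_ne_top).mp h3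
  have hle : ∀ k : ℕ, F s (L + 1) ≤ ENNReal.ofReal ((1/(8*A)) * (1/4)^k) := by
    intro k
    refine le_trans (hFmono _ _ ?_) (key k)
    have : (0:ℝ) < (1/2)^k := by positivity
    linarith
  have hlim : Tendsto (fun k : ℕ => ENNReal.ofReal ((1/(8*A)) * (1/4)^k)) atTop (nhds 0) := by
    rw [← ENNReal.ofReal_zero]
    apply ENNReal.tendsto_ofReal
    have := (tendsto_pow_atTop_nhds_zero_of_lt_one (by norm_num : (0:ℝ) ≤ 1/4)
      (by norm_num : (1/4:ℝ) < 1)).const_mul (1/(8*A))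
    simpa using this
  exact le_antisymm (ge_of_tendsto' hlim hle) zero_le
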